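/- Let ρ be a critical radius function on ℝⁿ with constants C₀, N as in (2.1), and let {x_j} be a maximal set of points such that the balls B(x_j, ρ(x_j)/C') are pairwise disjoint for a suitable constant C' depending on C₀, N. Then the balls B_j := B(x_j, ρ(x_j)) cover ℝⁿ, and for every σ ≥ 1 there exist constants C, M > 0 (depending on C₀, N, n) such that ∑_j χ_{σ B_j}(x) ≤ C σ^M for every x ∈ ℝⁿ. -/

import Mathlib

open Metric Set ENNReal

/-- A critical radius function on ℝⁿ. -/
def IsCriticalRadius {n : ℕ} (ρ : (Fin n → ℝ) → ℝ) : Prop :=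
  (∀ x, 0 < ρ x) ∧
  ∃ C : ℝ, 1 ≤ C ∧ ∃ N : ℝ, 0 < N ∧ ∀ x y : Fin n → ℝ,
    C⁻¹ * ρ x * (1 + dist x y / ρ x) ^ (-N) ≤ ρ y ∧
    ρ y ≤ C * ρ x * (1 + dist x y / ρ x) ^ (N / (N + 1))

set_option maxHeartbeats 1000000 in
/-- The Dziubański–Zienkiewicz covering lemma: for a suitable constant C', any maximal
family of points x_j with the balls B(x_j, ρ(x_j)/C') pairwise disjoint yields critical
balls B_j = B(x_j, ρ(x_j)) covering ℝⁿ with ∑_j χ_{σB_j} ≤ C σ^M for every σ ≥ 1. -/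
theorem stmt18 {n : ℕ} (hn : 1 ≤ n) (ρ : (Fin n → ℝ) → ℝ) (hρ : IsCriticalRadius ρ) :
    ∃ C' > 0, ∀ x : ℕ → Fin n → ℝ,
      (Pairwise fun i j =>
        Disjoint (closedBall (x i) (ρ (x i) / C')) (closedBall (x j) (ρ (x j) / C'))) →
      (∀ y : Fin n → ℝ, ∃ j : ℕ,
        ¬ Disjoint (closedBall y (ρ y / C')) (closedBall (x j) (ρ (x j) / C'))) →
      ((⋃ j : ℕ, closedBall (x j) (ρ (x j))) = univ) ∧
      ∀ σ : ℝ, 1 ≤ σ → ∃ C > 0, ∃ M > 0, ∀ pnt : Fin n → ℝ,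
        (∑' j : ℕ, Set.indicator (closedBall (x j) (σ * ρ (x j))) (fun _ => (1:ℝ≥0∞)) pnt)
          ≤ ENNReal.ofReal (C * σ ^ M) := by
  obtain ⟨hpos, C₀, hC₀, N, hN, hineq⟩ := hρ
  have hC₀0 : (0:ℝ) < C₀ := by linarith
  refine ⟨4*C₀+2, by linarith, fun x hdisj hmax => ?_⟩
  set C' : ℝ := 4*C₀+2 with hC'def
  have hC'pos : (0:ℝ) < C' := by rw [hC'def]; linarith
  have hC'1 : (1:ℝ) ≤ C' := by rw [hC'def]; linarith
  have hα0 : (0:ℝ) ≤ N/(N+1) := by positivity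
  have hα1 : N/(N+1) ≤ 1 := by
    rw [div_le_one (by linarith)]; linarith
  constructor
  · -- covering
    ext y
    simp only [mem_iUnion, mem_univ, iff_true]
    obtain ⟨j, hj⟩ := hmax y
    rw [Set.not_disjoint_iff] at hj
    obtain ⟨z, hz1, hz2⟩ := hj
    rw [mem_closedBall] at hz1 hz2
    refine ⟨j, ?_⟩
    rw [mem_closedBall]
    set d := dist y (x j) with hd
    have hdtri : d ≤ ρ y / C' + ρ (x j) / C' := by
      calc d ≤ dist y z + dist z (x j) := dist_triangle _ _ _
        _ = dist z y + dist z (x j) := by rw [dist_comm]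
        _ ≤ ρ y / C' + ρ (x j) / C' := by gcongr
    by_contra hcon
    push_neg at hcon
    have hρj : 0 < ρ (x j) := hpos _
    have hρy : 0 < ρ y := hpos y
    have hd0 : 0 < d := lt_trans hρj hcon
    -- slow variation: ρ y ≤ 2 C₀ d
    have h1 : ρ y ≤ C₀ * ρ (x j) * (1 + dist (x j) y / ρ (x j)) ^ (N/(N+1)) :=
      (hineq (x j) y).2
    rw [dist_comm (x j) y, ← hd] at h1
    have hbase : 1 + d / ρ (x j) ≤ 2 * d / ρ (x j) := by
      rw [mul_div_assoc]
      have : (1:ℝ) ≤ d / ρ (x j) := (one_le_div hρj).mpr hcon.le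
      linarith
    have hbase1 : (1:ℝ) ≤ 2 * d / ρ (x j) := by
      have : (1:ℝ) ≤ d / ρ (x j) := (one_le_div hρj).mpr hcon.le
      rw [mul_div_assoc]; linarith
    have h2 : (1 + d / ρ (x j)) ^ (N/(N+1)) ≤ 2 * d / ρ (x j) := by
      calc (1 + d / ρ (x j)) ^ (N/(N+1)) ≤ (2 * d / ρ (x j)) ^ (N/(N+1)) :=
            Real.rpow_le_rpow (by positivity) hbase hα0
        _ ≤ (2 * d / ρ (x j)) ^ (1:ℝ) :=
            Real.rpow_le_rpow_of_exponent_le hbase1 hα1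
        _ = 2 * d / ρ (x j) := Real.rpow_one _
    have h3 : ρ y ≤ 2 * C₀ * d := by
      calc ρ y ≤ C₀ * ρ (x j) * (2 * d / ρ (x j)) := by
            refine le_trans h1 ?_
            apply mul_le_mul_of_nonneg_left h2 (by positivity)
        _ = 2 * C₀ * d := by field_simp
    -- contradiction
    rw [hC'def] at hdtri
    rw [← add_div, le_div_iff₀ (by linarith : (0:ℝ) < 4*C₀+2)] at hdtri
    nlinarith
  · -- overlap
    intro σ hσ
    have hσ0 : (0:ℝ) < σ := by linarith
    refine ⟨(4*C₀^2*C'*(2:ℝ)^N)^n, by positivity, (⌈N⌉₊+2)*n, ?_, fun pnt => ?_⟩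
    · exact Nat.mul_pos (by omega) hn
    set rp := ρ pnt with hrpdef
    have hrp : 0 < rp := hpos pnt
    set s : ℝ := rp/(2*C₀*σ*C') with hsdef
    have hs : 0 < s := by positivity
    set R : ℝ := C₀*(2*σ)^N*rp with hRdef
    have h2σ : (1:ℝ) ≤ 2*σ := by linarith
    have ha0 : (0:ℝ) < (2*σ)^N := Real.rpow_pos_of_pos (by linarith) N
    have hR : 0 < R := by positivity
    -- facts about any j whose dilated ball contains pnt
    have key : ∀ j : ℕ, pnt ∈ closedBall (x j) (σ * ρ (x j)) →
        rp/(2*C₀*σ) ≤ ρ (x j) ∧ ρ (x j) ≤ R := by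
      intro j hjm
      rw [mem_closedBall] at hjm
      have hρj : 0 < ρ (x j) := hpos _
      have hd : dist (x j) pnt ≤ σ * ρ (x j) := by rw [dist_comm]; exact hjm
      have hbase : 1 + dist (x j) pnt / ρ (x j) ≤ 2*σ := by
        have : dist (x j) pnt / ρ (x j) ≤ σ := by
          rw [div_le_iff₀ hρj]; exact hd
        linarith
      have hbase0 : (1:ℝ) ≤ 1 + dist (x j) pnt / ρ (x j) := by
        have : 0 ≤ dist (x j) pnt / ρ (x j) := by positivity
        linarith
      constructor
      · -- lower bound from upper slow variation inequality
        have h1 : rp ≤ C₀ * ρ (x j) * (1 + dist (x j) pnt / ρ (x j)) ^ (N/(N+1)) :=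
          (hineq (x j) pnt).2
        have h2 : (1 + dist (x j) pnt / ρ (x j)) ^ (N/(N+1)) ≤ 2*σ := by
          calc (1 + dist (x j) pnt / ρ (x j)) ^ (N/(N+1)) ≤ (2*σ) ^ (N/(N+1)) :=
                Real.rpow_le_rpow (by linarith) hbase hα0
            _ ≤ (2*σ) ^ (1:ℝ) := Real.rpow_le_rpow_of_exponent_le h2σ hα1
            _ = 2*σ := Real.rpow_one _
        have h3 : rp ≤ C₀ * ρ (x j) * (2*σ) := by
          refine le_trans h1 ?_
          exact mul_le_mul_of_nonneg_left h2 (by positivity)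
        rw [div_le_iff₀ (by positivity)]
        nlinarith
      · -- upper bound from lower slow variation inequality
        have h1 : C₀⁻¹ * ρ (x j) * (1 + dist (x j) pnt / ρ (x j)) ^ (-N) ≤ rp :=
          (hineq (x j) pnt).1
        have h2 : ((2*σ)^N)⁻¹ ≤ (1 + dist (x j) pnt / ρ (x j)) ^ (-N) := by
          rw [Real.rpow_neg (by linarith)]
          apply inv_anti₀ (Real.rpow_pos_of_pos (by linarith) N)
          exact Real.rpow_le_rpow (by linarith) hbase hN.le
        have h3 : C₀⁻¹ * ρ (x j) * ((2*σ)^N)⁻¹ ≤ rp := by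
          refine le_trans ?_ h1
          exact mul_le_mul_of_nonneg_left h2 (by positivity)
        rw [hRdef]
        calc ρ (x j) = (C₀ * (2*σ)^N) * (C₀⁻¹ * ρ (x j) * ((2*σ)^N)⁻¹) := by
              field_simp
          _ ≤ (C₀ * (2*σ)^N) * rp := by
              exact mul_le_mul_of_nonneg_left h3 (by positivity)
          _ = C₀*(2*σ)^N*rp := by ring
    -- measure-theoretic counting
    set u := MeasureTheory.volume (ball (0 : Fin n → ℝ) 1) with hudef
    have hu0 : u ≠ 0 := (measure_ball_pos _ _ one_pos).ne'
    have huT : u ≠ ⊤ := MeasureTheory.measure_ball_lt_top.ne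
    have hvol : ∀ (z : Fin n → ℝ) (r : ℝ), 0 ≤ r →
        MeasureTheory.volume (closedBall z r) = ENNReal.ofReal (r ^ n) * u := by
      intro z r hr
      have h := MeasureTheory.Measure.addHaar_closedBall
        (MeasureTheory.volume : MeasureTheory.Measure (Fin n → ℝ)) z hr
      have hfr : Module.finrank ℝ (Fin n → ℝ) = n := by simp
      rw [hfr] at h
      exact h
    set c : ℝ≥0∞ := ENNReal.ofReal (s ^ n) * u with hcdef
    have hc0 : c ≠ 0 := by
      simp only [hcdef, ne_eq, mul_eq_zero, not_or]
      exact ⟨by simp [ENNReal.ofReal_eq_zero, not_le]; positivity, hu0⟩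
    have hcT : c ≠ ⊤ := ENNReal.mul_ne_top ENNReal.ofReal_ne_top huT
    have hsubB : ∀ j : ℕ, pnt ∈ closedBall (x j) (σ * ρ (x j)) →
        closedBall (x j) (ρ (x j) / C') ⊆ closedBall pnt (2*σ*R) := by
      intro j hjm z hz
      rw [mem_closedBall] at hz hjm ⊢
      have hρj : 0 < ρ (x j) := hpos _
      have hjR := (key j (by rw [mem_closedBall]; exact hjm)).2
      calc dist z pnt ≤ dist z (x j) + dist (x j) pnt := dist_triangle _ _ _
        _ ≤ ρ (x j) / C' + σ * ρ (x j) := by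
            refine add_le_add hz ?_
            rw [dist_comm]; exact hjm
        _ ≤ R + σ * R := by
            gcongr
            calc ρ (x j) / C' ≤ ρ (x j) / 1 := by gcongr
              _ = ρ (x j) := div_one _
              _ ≤ R := hjR
        _ ≤ 2*σ*R := by nlinarith
    have hmain : (∑' j : ℕ, Set.indicator (closedBall (x j) (σ * ρ (x j)))
        (fun _ => (1:ℝ≥0∞)) pnt) * c ≤ ENNReal.ofReal ((2*σ*R) ^ n) * u := by
      rw [← ENNReal.tsum_mul_right]
      calc (∑' j : ℕ, Set.indicator (closedBall (x j) (σ * ρ (x j)))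
            (fun _ => (1:ℝ≥0∞)) pnt * c)
          ≤ ∑' j : ℕ, MeasureTheory.volume
              (closedBall (x j) (ρ (x j) / C') ∩ closedBall pnt (2*σ*R)) := by
            refine ENNReal.tsum_le_tsum fun j => ?_
            by_cases hjm : pnt ∈ closedBall (x j) (σ * ρ (x j))
            · rw [Set.indicator_of_mem hjm, one_mul,
                Set.inter_eq_self_of_subset_left (hsubB j hjm)]
              have hjlow := (key j hjm).1
              have hssub : closedBall (x j) s ⊆ closedBall (x j) (ρ (x j) / C') := by
                apply closedBall_subset_closedBall
                rw [hsdef, div_le_div_iff₀ (by positivity) hC'pos]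
                rw [div_le_iff₀ (by positivity)] at hjlow
                nlinarith [mul_le_mul_of_nonneg_right hjlow hC'pos.le]
              calc c = MeasureTheory.volume (closedBall (x j) s) := (hvol _ _ hs.le).symm
                _ ≤ _ := MeasureTheory.measure_mono hssub
            · rw [Set.indicator_of_notMem hjm, zero_mul]
              exact zero_le
        _ = MeasureTheory.volume
              (⋃ j : ℕ, closedBall (x j) (ρ (x j) / C') ∩ closedBall pnt (2*σ*R)) := by
            refine (MeasureTheory.measure_iUnion ?_ fun j =>
              (measurableSet_closedBall.inter measurableSet_closedBall)).symm
            exact fun i j hij =>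
              ((hdisj hij).mono inter_subset_left inter_subset_left)
        _ ≤ MeasureTheory.volume (closedBall pnt (2*σ*R)) :=
            MeasureTheory.measure_mono (iUnion_subset fun j => inter_subset_right)
        _ = ENNReal.ofReal ((2*σ*R) ^ n) * u := hvol _ _ (by positivity)
    -- divide out
    have hT : (∑' j : ℕ, Set.indicator (closedBall (x j) (σ * ρ (x j)))
        (fun _ => (1:ℝ≥0∞)) pnt) ≤ (ENNReal.ofReal ((2*σ*R) ^ n) * u) / c := by
      rw [ENNReal.le_div_iff_mul_le (Or.inl hc0) (Or.inl hcT)]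
      exact hmain
    refine le_trans hT ?_
    rw [hcdef, ENNReal.mul_div_mul_right _ _ hu0 huT,
      ← ENNReal.ofReal_div_of_pos (by positivity)]
    apply ENNReal.ofReal_le_ofReal
    -- final real computation
    have ha2 : (2*σ)^N = 2^N * σ^N := Real.mul_rpow (by norm_num) hσ0.le
    have hb2 : σ^((N+2):ℝ) = σ^N * σ^(2:ℕ) := by
      rw [← Real.rpow_natCast σ 2, ← Real.rpow_add hσ0]
      norm_num
    have h1 : (2*σ*R) / s = (4*C₀^2*C'*(2:ℝ)^N) * σ^((N+2):ℝ) := by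
      rw [hRdef, hsdef, ha2, hb2]
      field_simp
      ring
    calc (2*σ*R) ^ n / s ^ n = ((2*σ*R) / s) ^ n := (div_pow _ _ _).symm
      _ = ((4*C₀^2*C'*(2:ℝ)^N) * σ^((N+2):ℝ)) ^ n := by rw [h1]
      _ = (4*C₀^2*C'*(2:ℝ)^N)^n * (σ^((N+2):ℝ))^n := mul_pow _ _ _
      _ = (4*C₀^2*C'*(2:ℝ)^N)^n * σ^((N+2)*(n:ℝ)) := by
          rw [← Real.rpow_natCast (σ^((N+2):ℝ)) n, ← Real.rpow_mul hσ0.le]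
      _ ≤ (4*C₀^2*C'*(2:ℝ)^N)^n * σ^((((⌈N⌉₊+2)*n : ℕ):ℝ)) := by
          refine mul_le_mul_of_nonneg_left ?_ (by positivity)
          refine Real.rpow_le_rpow_of_exponent_le hσ ?_
          have hceil : N ≤ (⌈N⌉₊ : ℝ) := Nat.le_ceil N
          have hn0 : (0:ℝ) ≤ (n:ℝ) := Nat.cast_nonneg n
          push_cast
          nlinarith
      _ = (4*C₀^2*C'*(2:ℝ)^N)^n * σ^((⌈N⌉₊+2)*n) := by
          rw [Real.rpow_natCast]
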